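/- If n is an even positive integer and i is an integer with 2 ≤ i ≤ n/2, then |K^n_i(n/2 + 1)| < C(n, ⌊i/2⌋). -/

import Mathlib

open Finset

open Polynomial

def kraw (n k i : ℕ) : ℤ :=
  ∑ j ∈ Finset.range (k + 1), (-1) ^ j * (i.choose j) * ((n - i).choose (k - j))


lemma coeff_one_sub_X_pow (a j : ℕ) : ((1 - X : Polynomial ℤ)^a).coeff j = (-1)^j * a.choose j := by
  have h : (1 - X : Polynomial ℤ)^a = ∑ k ∈ range (a+1), C ((-1)^k * (a.choose k : ℤ)) * X^k := by
    rw [sub_eq_add_neg, add_comm, add_pow]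
    refine Finset.sum_congr rfl fun k _ => ?_
    rw [neg_pow, one_pow]
    simp [C_mul, mul_comm, mul_assoc, mul_left_comm]
  rw [h, finset_sum_coeff]
  simp only [coeff_C_mul, coeff_X_pow, mul_ite, mul_one, mul_zero]
  rw [Finset.sum_ite_eq (range (a+1)) j]
  by_cases hj : j ≤ a
  · simp [Nat.lt_succ_of_le hj]
  · rw [if_neg (by simp; omega)]
    simp [Nat.choose_eq_zero_of_lt (show a < j by omega)]

lemma coeff_one_sub_X_sq_pow (a i : ℕ) :
    ((1 - X^2 : Polynomial ℤ)^a).coeff i =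
      if Even i then (-1:ℤ)^(i/2) * (a.choose (i/2) : ℤ) else 0 := by
  have h : (1 - X^2 : Polynomial ℤ)^a = ∑ k ∈ range (a+1), C ((-1)^k * (a.choose k : ℤ)) * X^(2*k) := by
    rw [sub_eq_add_neg, add_comm, add_pow]
    refine Finset.sum_congr rfl fun k _ => ?_
    rw [neg_pow (X^2 : Polynomial ℤ), one_pow, ← pow_mul]
    simp [C_mul, mul_comm, mul_assoc, mul_left_comm]
  rw [h, finset_sum_coeff]
  simp only [coeff_C_mul, coeff_X_pow, mul_ite, mul_one, mul_zero]
  by_cases he : Even i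
  · obtain ⟨t, ht⟩ := he
    rw [if_pos ⟨t, ht⟩]
    have hi2 : i / 2 = t := by omega
    rw [hi2]
    have hc : ∀ k, (i = 2 * k) ↔ (t = k) := by omega
    simp only [hc]
    rw [Finset.sum_ite_eq (range (a+1)) t]
    by_cases hta : t ≤ a
    · simp [Nat.lt_succ_of_le hta]
    · rw [if_neg (by simp; omega)]
      simp [Nat.choose_eq_zero_of_lt (show a < t by omega)]
  · have hc : ∀ k ∈ range (a+1), ¬ (i = 2 * k) := by
      intro k _ hk; exact he ⟨k, by omega⟩
    rw [if_neg he]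
    exact Finset.sum_eq_zero fun k hk => if_neg (hc k hk)


lemma kraw_coeff (n k i : ℕ) :
    kraw n k i = ((1 - X)^i * (1 + X)^(n - i) : Polynomial ℤ).coeff k := by
  rw [kraw, coeff_mul, Finset.Nat.sum_antidiagonal_eq_sum_range_succ_mk]
  refine Finset.sum_congr rfl fun j _ => ?_
  rw [coeff_one_sub_X_pow, coeff_one_add_X_pow]

lemma pascal (m t : ℕ) (ht : 1 ≤ t) (hm : 1 ≤ m) :
    m.choose t = (m-1).choose (t-1) + (m-1).choose t := by
  have h2 : m = (m-1) + 1 := by omega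
  have h3 : t = (t-1) + 1 := by omega
  rw [h2, h3, Nat.choose_succ_succ', ← h2, ← h3]

lemma nat1 (m t : ℕ) (ht : 1 ≤ t) (htm : t ≤ m) : m.choose t < (2*m).choose t := by
  have hp := pascal (2*m) t ht (by omega)
  have h4 : m.choose t ≤ (2*m-1).choose t := Nat.choose_le_choose t (by omega)
  have h5 : 0 < (2*m-1).choose (t-1) := Nat.choose_pos (by omega)
  omega

lemma nat2 (m t : ℕ) (ht : 1 ≤ t) (htm : 2*t+1 ≤ m) : 2 * (m-1).choose t < (2*m).choose t := by
  have hv : (2*m).choose t = ∑ ij ∈ antidiagonal t, m.choose ij.1 * m.choose ij.2 := by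
    rw [two_mul]; exact Nat.add_choose_eq m m t
  have hsub : ({(t,0),(t-1,1)} : Finset (ℕ×ℕ)) ⊆ antidiagonal t := by
    intro x hx
    simp only [Finset.mem_insert, Finset.mem_singleton] at hx
    rcases hx with rfl | rfl
    · exact Finset.HasAntidiagonal.mem_antidiagonal.mpr (by omega)
    · exact Finset.HasAntidiagonal.mem_antidiagonal.mpr (by omega)
  have hne : ((t,0) : ℕ×ℕ) ≠ (t-1,1) := by simp
  have hge := Finset.sum_le_sum_of_subset (f := fun ij : ℕ×ℕ => m.choose ij.1 * m.choose ij.2) hsub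
  rw [Finset.sum_pair hne] at hge
  simp only [Nat.choose_zero_right, Nat.choose_one_right, mul_one] at hge
  have h6 : m * (m-1).choose (t-1) = m.choose t * t := by
    have := Nat.add_one_mul_choose_eq (m-1) (t-1)
    have hm1 : (m-1) + 1 = m := by omega
    have ht1 : (t-1) + 1 = t := by omega
    rwa [hm1, ht1] at this
  have h7 : (m-1).choose (t-1) ≤ m.choose (t-1) := Nat.choose_le_choose _ (by omega)
  have h8 : m.choose t ≤ m.choose (t-1) * m := by
    calc m.choose t ≤ m.choose t * t := Nat.le_mul_of_pos_right _ ht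
    _ = m * (m-1).choose (t-1) := h6.symm
    _ ≤ m * m.choose (t-1) := Nat.mul_le_mul_left m h7
    _ = m.choose (t-1) * m := mul_comm _ _
  have h9 := pascal m t ht (by omega)
  have h10 : 0 < (m-1).choose (t-1) := Nat.choose_pos (by omega)
  omega

theorem stmt_14 (n i : ℕ) (hn : 0 < n) (he : Even n) (hi1 : 2 ≤ i) (hi2 : i ≤ n / 2) :
    |kraw n i (n / 2 + 1)| < (n.choose (i / 2) : ℤ) := by
  obtain ⟨m, hm⟩ := he
  have hd : n / 2 = m := by omega
  have hmn : n = 2 * m := by omega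
  have him : i ≤ m := by omega
  rw [hd]
  have hni : n - (m+1) = m - 1 := by omega
  have hk : kraw n i (m+1) = ((1 - 2*X + X^2) * (1 - X^2)^(m-1) : Polynomial ℤ).coeff i := by
    rw [kraw_coeff, hni]
    congr 1
    have h1 : m + 1 = 2 + (m-1) := by omega
    rw [h1, pow_add, mul_assoc, ← mul_pow]
    have h2 : ((1 - X) * (1 + X) : Polynomial ℤ) = 1 - X^2 := by ring
    rw [h2]
    ring
  obtain ⟨j, rfl⟩ : ∃ j, i = j + 2 := ⟨i - 2, by omega⟩
  set q : Polynomial ℤ := (1 - X^2)^(m-1) with hq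
  have hexp : ((1 - 2*X + X^2) * q : Polynomial ℤ).coeff (j+2)
      = q.coeff (j+2) - 2 * q.coeff (j+1) + q.coeff j := by
    have hsplit : ((1 - 2*X + X^2) * q : Polynomial ℤ) = q - Polynomial.C 2 * (X * q) + X^2 * q := by
      have hc2 : (Polynomial.C 2 : Polynomial ℤ) = 2 := by norm_num
      rw [hc2]; ring
    rw [hsplit, coeff_add, coeff_sub, coeff_C_mul]
    have e1 : (X * q).coeff (j+2) = q.coeff (j+1) := coeff_X_mul q (j+1)
    have e2 : (X^2 * q).coeff (j+2) = q.coeff j := coeff_X_pow_mul q 2 j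
    rw [e1, e2]
  have B : ∀ r, q.coeff r = if Even r then (-1:ℤ)^(r/2) * ((m-1).choose (r/2) : ℤ) else 0 :=
    fun r => coeff_one_sub_X_sq_pow (m-1) r
  rw [hk, hexp, B (j+2), B (j+1), B j]
  rcases Nat.even_or_odd j with hj | hj
  · -- i = j + 2 even, j = s + s
    obtain ⟨s, hs⟩ := hj
    rw [if_pos (by exact ⟨s+1, by omega⟩), if_neg (by rintro ⟨u, hu⟩; omega),
        if_pos (by exact ⟨s, by omega⟩)]
    have d1 : (j+2)/2 = s+1 := by omega
    have d2 : j/2 = s := by omega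
    rw [d1, d2]
    have key : ((-1:ℤ)^(s+1) * ((m-1).choose (s+1) : ℤ) - 2*0 + (-1:ℤ)^s * ((m-1).choose s : ℤ))
        = (-1:ℤ)^s * (((m-1).choose s : ℤ) - ((m-1).choose (s+1) : ℤ)) := by
      rw [pow_succ]; ring
    rw [key, abs_mul, abs_pow, abs_neg, abs_one, one_pow, one_mul]
    have habs : |((m-1).choose s : ℤ) - ((m-1).choose (s+1) : ℤ)|
        ≤ ((m-1).choose s : ℤ) + ((m-1).choose (s+1) : ℤ) := by
      rw [abs_le]; constructor <;> [skip; skip] <;> push_cast <;> omega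
    have hp : m.choose (s+1) = (m-1).choose s + (m-1).choose (s+1) := by
      have := pascal m (s+1) (by omega) (by omega); simpa using this
    have h1 := nat1 m (s+1) (by omega) (by omega)
    calc |((m-1).choose s : ℤ) - ((m-1).choose (s+1) : ℤ)|
        ≤ ((m-1).choose s : ℤ) + ((m-1).choose (s+1) : ℤ) := habs
      _ < (n.choose (s+1) : ℤ) := by rw [hmn]; exact_mod_cast by omega
  · -- i = j + 2 odd, j = 2s + 1
    obtain ⟨s, hs⟩ := hj
    rw [if_neg (by rintro ⟨u, hu⟩; omega), if_pos (by exact ⟨s+1, by omega⟩),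
        if_neg (by rintro ⟨u, hu⟩; omega)]
    have d1 : (j+1)/2 = s+1 := by omega
    have d2 : (j+2)/2 = s+1 := by omega
    rw [d1, d2]
    have key : ((0:ℤ) - 2*((-1:ℤ)^(s+1) * ((m-1).choose (s+1) : ℤ)) + 0)
        = (-1:ℤ)^(s+1) * (-2 * ((m-1).choose (s+1) : ℤ)) := by ring
    rw [key, abs_mul, abs_pow, abs_neg, abs_one, one_pow, one_mul]
    have h2 := nat2 m (s+1) (by omega) (by omega)
    have habs : |(-2 : ℤ) * ((m-1).choose (s+1) : ℤ)| = 2 * ((m-1).choose (s+1) : ℤ) := by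
      rw [abs_mul]; simp
    rw [habs, hmn]
    push_cast
    omega
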